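/- For any two distinct strings x, y over Σ and any letters λ, μ ∈ Σ with λ ≤ μ: if x ≺ y in V-order, then λx ≺ μy (where λx and μy denote the strings obtained by prepending λ to x and μ to y respectively). -/

import Mathlib

variable {α : Type*} [LinearOrder α]

/-- The star operation on strings: delete the letter `x_h`, where `h` is the
start of the longest non-decreasing suffix (so `h = 1` iff the whole string is
non-decreasing, and otherwise `x_{h-1} > x_h ≤ x_{h+1} ≤ ⋯ ≤ x_n`). -/
def vstar : List α → List α
  | [] => []
  | a :: t => if List.IsChain (· ≤ ·) (a :: t) then t else a :: vstar t

/-- V-order `≺` between distinct strings `x`, `y`: either `x` lies on the path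
`y, y*, y^{2*}, …, ε`, or (if neither lies on the path of the other) taking the
least `s, t` with `x^{(s+1)*} = y^{(t+1)*}` and the greatest position `j` at
which `s = x^{s*}` and `t = y^{t*}` differ, the letter of `x^{s*}` at `j` is
smaller than that of `y^{t*}`. -/
def VLess (x y : List α) : Prop :=
  (∃ k : ℕ, 0 < k ∧ vstar^[k] y = x) ∨
  ((¬ ∃ k : ℕ, vstar^[k] y = x) ∧ (¬ ∃ k : ℕ, vstar^[k] x = y) ∧
    ∃ s t : ℕ,
      vstar^[s + 1] x = vstar^[t + 1] y ∧
      (∀ s' t' : ℕ, vstar^[s' + 1] x = vstar^[t' + 1] y → s ≤ s' ∧ t ≤ t') ∧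
      ∃ j : ℕ, j < (vstar^[s] x).length ∧
        (∀ j' : ℕ, j < j' → (vstar^[s] x)[j']? = (vstar^[t] y)[j']?) ∧
        ∃ a b : α, (vstar^[s] x)[j]? = some a ∧ (vstar^[t] y)[j]? = some b ∧
          a < b)



set_option linter.unusedSectionVars false
set_option maxHeartbeats 1000000

theorem vstar_nil : vstar ([] : List α) = [] := rfl

theorem vstar_cons_of_chain {a : α} {t : List α} (h : List.IsChain (· ≤ ·) (a :: t)) :
    vstar (a :: t) = t := by simp [vstar, h]

theorem vstar_cons_of_not_chain {a : α} {t : List α} (h : ¬ List.IsChain (· ≤ ·) (a :: t)) :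
    vstar (a :: t) = a :: vstar t := by simp [vstar, h]

theorem length_vstar (l : List α) : (vstar l).length = l.length - 1 := by
  induction l with
  | nil => rfl
  | cons a t ih =>
    by_cases h : List.IsChain (· ≤ ·) (a :: t)
    · simp [vstar_cons_of_chain h]
    · have ht : t ≠ [] := by rintro rfl; exact h (List.isChain_singleton a)
      have : 1 ≤ t.length := List.length_pos_iff.2 ht
      simp [vstar_cons_of_not_chain h, ih]; omega

theorem length_iter (k : ℕ) (l : List α) : (vstar^[k] l).length = l.length - k := by
  induction k generalizing l with
  | zero => simp
  | succ n ih =>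
    rw [Function.iterate_succ_apply, ih, length_vstar]; omega

theorem iter_nil (k : ℕ) : vstar^[k] ([] : List α) = [] := by
  induction k with
  | zero => rfl
  | succ n ih => rw [Function.iterate_succ_apply', ih, vstar_nil]

theorem iter_eq_nil {l : List α} {k : ℕ} (h : l.length ≤ k) : vstar^[k] l = [] := by
  have := length_iter k l
  have h0 : (vstar^[k] l).length = 0 := by omega
  exact List.length_eq_zero_iff.1 h0

theorem iter_ne_nil {l : List α} {k : ℕ} (h : k < l.length) : vstar^[k] l ≠ [] := by
  intro he
  have := length_iter k l
  rw [he] at this; simp at this; omega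

theorem iter_shift {a b r : ℕ} {x y : List α} (h : vstar^[a] x = vstar^[b] y) :
    vstar^[a + r] x = vstar^[b + r] y := by
  rw [add_comm a r, add_comm b r, Function.iterate_add_apply, Function.iterate_add_apply, h]

theorem idx_eq {w : List α} {i j : ℕ} (h : vstar^[i] w = vstar^[j] w)
    (hne : vstar^[i] w ≠ []) : i = j := by
  have h1 := length_iter i w
  have h2 := length_iter j w
  have h3 : 0 < (vstar^[i] w).length := List.length_pos_iff.2 hne
  rw [h] at h1 h3
  omega

theorem nil_mono {w : List α} {i j : ℕ} (h : vstar^[i] w = []) (hij : i ≤ j) :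
    vstar^[j] w = [] := by
  obtain ⟨r, rfl⟩ := Nat.exists_eq_add_of_le hij
  rw [add_comm, Function.iterate_add_apply, h, iter_nil]

def dpos : List α → ℕ
  | [] => 0
  | a :: t => if List.IsChain (· ≤ ·) (a :: t) then 0 else dpos t + 1

theorem dpos_cons_of_chain {a : α} {t : List α} (h : List.IsChain (· ≤ ·) (a :: t)) :
    dpos (a :: t) = 0 := by simp [dpos, h]

theorem dpos_cons_of_not_chain {a : α} {t : List α} (h : ¬ List.IsChain (· ≤ ·) (a :: t)) :
    dpos (a :: t) = dpos t + 1 := by simp [dpos, h]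

theorem dpos_eq_zero_iff {l : List α} : dpos l = 0 ↔ List.IsChain (· ≤ ·) l := by
  cases l with
  | nil => simp [dpos]
  | cons a t =>
    by_cases h : List.IsChain (· ≤ ·) (a :: t)
    · simp [dpos_cons_of_chain h, h]
    · simp [dpos_cons_of_not_chain h, h]

theorem vstar_eq_eraseIdx (l : List α) : vstar l = l.eraseIdx (dpos l) := by
  induction l with
  | nil => rfl
  | cons a t ih =>
    by_cases h : List.IsChain (· ≤ ·) (a :: t)
    · simp [vstar_cons_of_chain h, dpos_cons_of_chain h]
    · simp [vstar_cons_of_not_chain h, dpos_cons_of_not_chain h, ih]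

theorem dpos_lt_length {l : List α} (h : l ≠ []) : dpos l < l.length := by
  induction l with
  | nil => exact absurd rfl h
  | cons a t ih =>
    by_cases hc : List.IsChain (· ≤ ·) (a :: t)
    · simp [dpos_cons_of_chain hc]
    · have ht : t ≠ [] := by rintro rfl; exact hc (List.isChain_singleton a)
      simp only [dpos_cons_of_not_chain hc, List.length_cons]
      have := ih ht; omega

theorem dpos_pred_gt {l : List α} (h : 0 < dpos l) :
    ∃ a b, l[dpos l - 1]? = some a ∧ l[dpos l]? = some b ∧ b < a := by
  induction l with
  | nil => simp [dpos] at h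
  | cons a t ih =>
    by_cases hc : List.IsChain (· ≤ ·) (a :: t)
    · rw [dpos_cons_of_chain hc] at h; omega
    · rw [dpos_cons_of_not_chain hc] at h ⊢
      by_cases h0 : 0 < dpos t
      · obtain ⟨u, v, h1, h2, h3⟩ := ih h0
        refine ⟨u, v, ?_, ?_, h3⟩
        · have : dpos t + 1 - 1 = (dpos t - 1) + 1 := by omega
          rw [this, List.getElem?_cons_succ]; exact h1
        · rw [List.getElem?_cons_succ]; exact h2
      · have hd : dpos t = 0 := by omega
        have hct : List.IsChain (· ≤ ·) t := dpos_eq_zero_iff.1 hd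
        have ht : t ≠ [] := by rintro rfl; exact hc (List.isChain_singleton a)
        obtain ⟨b, t', rfl⟩ := List.exists_cons_of_ne_nil ht
        have hab : ¬ a ≤ b := by
          intro hab; exact hc (List.isChain_cons_cons.2 ⟨hab, hct⟩)
        exact ⟨a, b, by simp [hd], by simp [hd], lt_of_not_ge hab⟩

theorem vstar_of_chain {l : List α} (h : List.IsChain (· ≤ ·) l) : vstar l = l.tail := by
  cases l with
  | nil => rfl
  | cons a t => simp [vstar_cons_of_chain h]

theorem chain_vstar {l : List α} (h : List.IsChain (· ≤ ·) l) :
    List.IsChain (· ≤ ·) (vstar l) := by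
  rw [vstar_of_chain h]; exact h.tail

theorem iter_of_chain {l : List α} (h : List.IsChain (· ≤ ·) l) (r : ℕ) :
    vstar^[r] l = l.drop r := by
  induction r generalizing l with
  | zero => simp
  | succ n ih =>
    rw [Function.iterate_succ_apply, vstar_of_chain h, ih h.tail, List.drop_tail]

theorem chain_of_eq_cons_vstar {l : List α} {c : α} (h : l = c :: vstar l) :
    List.IsChain (· ≤ ·) l := by
  induction l generalizing c with
  | nil => simp at h
  | cons a t ih =>
    by_cases hc : List.IsChain (· ≤ ·) (a :: t)
    · exact hc
    · exfalso
      rw [vstar_cons_of_not_chain hc] at h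
      simp only [List.cons.injEq] at h
      have hct : List.IsChain (· ≤ ·) t := ih h.2
      apply hc
      rw [h.2]
      rw [h.2] at hct
      exact List.isChain_cons_cons.2 ⟨le_refl a, hct⟩

theorem getElem?_eraseIdx_of_lt {l : List α} {p i : ℕ} (h : i < p) :
    (l.eraseIdx p)[i]? = l[i]? := by
  induction l generalizing p i with
  | nil => simp
  | cons a t ih =>
    cases p with
    | zero => omega
    | succ p' =>
      cases i with
      | zero => simp [List.eraseIdx]
      | succ i' => simp only [List.eraseIdx, List.getElem?_cons_succ]; exact ih (by omega)

theorem getElem?_eraseIdx_of_ge {l : List α} {p i : ℕ} (h : p ≤ i) :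
    (l.eraseIdx p)[i]? = l[i + 1]? := by
  induction l generalizing p i with
  | nil => simp
  | cons a t ih =>
    cases p with
    | zero => simp [List.eraseIdx]
    | succ p' =>
      cases i with
      | zero => omega
      | succ i' => simp only [List.eraseIdx, List.getElem?_cons_succ]; exact ih (by omega)

theorem eq_of_eraseIdx_eq {u v : List α} {p : ℕ} (hp : p < u.length) (hq : p < v.length)
    (he : u.eraseIdx p = v.eraseIdx p) (hg : u[p]? = v[p]?) : u = v := by
  induction u generalizing v p with
  | nil => simp at hp
  | cons a t ih =>
    obtain ⟨b, w, rfl⟩ := List.exists_cons_of_ne_nil (List.ne_nil_of_length_pos (by omega) : v ≠ [])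
    cases p with
    | zero => simp_all [List.eraseIdx]
    | succ p' =>
      simp only [List.eraseIdx, List.cons.injEq] at he
      simp only [List.getElem?_cons_succ] at hg
      simp only [List.length_cons] at hp hq
      rw [he.1, ih (by omega) (by omega) he.2 hg]

theorem kidx_ex (c : α) (w : List α) : ∃ i, List.IsChain (· ≤ ·) (c :: vstar^[i] w) :=
  ⟨w.length, by rw [iter_eq_nil le_rfl]; exact List.isChain_singleton c⟩

noncomputable def kidx (c : α) (w : List α) : ℕ := Nat.find (kidx_ex c w)

theorem kidx_chain (c : α) (w : List α) :
    List.IsChain (· ≤ ·) (c :: vstar^[kidx c w] w) := Nat.find_spec (kidx_ex c w)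

theorem kidx_min {c : α} {w : List α} {i : ℕ} (h : i < kidx c w) :
    ¬ List.IsChain (· ≤ ·) (c :: vstar^[i] w) := Nat.find_min (kidx_ex c w) h

theorem kidx_le {c : α} {w : List α} {i : ℕ}
    (h : List.IsChain (· ≤ ·) (c :: vstar^[i] w)) : kidx c w ≤ i := Nat.find_le h

theorem kidx_le_length (c : α) (w : List α) : kidx c w ≤ w.length :=
  kidx_le (by rw [iter_eq_nil le_rfl]; exact List.isChain_singleton c)

theorem iter_cons_le {c : α} {w : List α} {m : ℕ} (h : m ≤ kidx c w) :
    vstar^[m] (c :: w) = c :: vstar^[m] w := by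
  induction m with
  | zero => simp
  | succ n ih =>
    rw [Function.iterate_succ_apply', ih (by omega), Function.iterate_succ_apply']
    exact vstar_cons_of_not_chain (kidx_min (by omega))

theorem iter_cons_gt {c : α} {w : List α} {m : ℕ} (h : kidx c w < m) :
    vstar^[m] (c :: w) = vstar^[m - 1] w := by
  have base : vstar^[kidx c w + 1] (c :: w) = vstar^[kidx c w] w := by
    rw [Function.iterate_succ_apply', iter_cons_le le_rfl]
    exact vstar_cons_of_chain (kidx_chain c w)
  obtain ⟨r, hr⟩ : ∃ r, m = kidx c w + 1 + r := ⟨m - (kidx c w + 1), by omega⟩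
  subst hr
  rw [add_comm, Function.iterate_add_apply, base, ← Function.iterate_add_apply]
  congr 1

def VLt (u v : List α) : Prop :=
  dpos v < dpos u ∨
    (dpos u = dpos v ∧ ∃ a b, u[dpos u]? = some a ∧ v[dpos v]? = some b ∧ a < b)

theorem cmp_wit {u v : List α} (hv : vstar u = vstar v) (hlen : u.length = v.length)
    (hnil : u ≠ []) (hlt : VLt u v) :
    ∃ j, j < u.length ∧ (∀ j', j < j' → u[j']? = v[j']?) ∧
      ∃ a b, u[j]? = some a ∧ v[j]? = some b ∧ a < b := by
  have hvnil : v ≠ [] := by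
    intro h; rw [h] at hlen; exact hnil (List.length_eq_zero_iff.1 (by simpa using hlen))
  have hq_le_p : dpos v ≤ dpos u := by
    rcases hlt with h | ⟨h, _⟩; omega; omega
  have hz1 : vstar u = u.eraseIdx (dpos u) := vstar_eq_eraseIdx u
  have hz2 : vstar u = v.eraseIdx (dpos v) := by rw [hv]; exact vstar_eq_eraseIdx v
  have hp_lt : dpos u < u.length := dpos_lt_length hnil
  refine ⟨dpos u, hp_lt, ?_, ?_⟩
  · intro j' hj'
    have h1 : u[j']? = (vstar u)[j' - 1]? := by
      rw [hz1, getElem?_eraseIdx_of_ge (by omega)]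
      congr 1; omega
    have h2 : v[j']? = (vstar u)[j' - 1]? := by
      rw [hz2, getElem?_eraseIdx_of_ge (by omega)]
      congr 1; omega
    rw [h1, h2]
  · rcases hlt with hqp | ⟨heq, a, b, ha, hb, hab⟩
    · -- dpos v < dpos u : last diff at dpos u
      obtain ⟨a, b, ha, hb, hba⟩ := dpos_pred_gt (by omega : 0 < dpos u)
      refine ⟨b, a, hb, ?_, hba⟩
      have h2 : v[dpos u]? = (vstar u)[dpos u - 1]? := by
        rw [hz2, getElem?_eraseIdx_of_ge (by omega)]
        congr 1; omega
      have h1 : (vstar u)[dpos u - 1]? = u[dpos u - 1]? := by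
        rw [hz1, getElem?_eraseIdx_of_lt (by omega)]
      rw [h2, h1, ha]
    · exact ⟨a, b, ha, by rw [heq]; exact hb, hab⟩

theorem vlt_total {u v : List α} (hv : vstar u = vstar v) (hlen : u.length = v.length)
    (hnil : u ≠ []) (hne : u ≠ v) : VLt u v ∨ VLt v u := by
  have hvnil : v ≠ [] := by
    intro h; rw [h] at hlen; exact hnil (List.length_eq_zero_iff.1 (by simpa using hlen))
  rcases lt_trichotomy (dpos u) (dpos v) with h | h | h
  · exact Or.inr (Or.inl h)
  · have hp_lt : dpos u < u.length := dpos_lt_length hnil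
    have hq_lt : dpos v < v.length := dpos_lt_length hvnil
    have ha : u[dpos u]? = some u[dpos u] := List.getElem?_eq_getElem hp_lt
    have hb : v[dpos v]? = some v[dpos v] := List.getElem?_eq_getElem hq_lt
    set a := u[dpos u] with hadef
    set b := v[dpos v] with hbdef
    have hab : a ≠ b := by
      intro habe
      apply hne
      apply eq_of_eraseIdx_eq hp_lt (by omega : dpos u < v.length)
      · rw [← vstar_eq_eraseIdx u, hv, vstar_eq_eraseIdx v, h]
      · rw [ha, h, hb, habe]
    rcases lt_or_gt_of_ne hab with hlt | hgt
    · exact Or.inl (Or.inr ⟨h, a, b, ha, h ▸ hb, hlt⟩)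
    · exact Or.inr (Or.inr ⟨h.symm, b, a, hb, h ▸ ha, hgt⟩)
  · exact Or.inl (Or.inl h)

theorem vlt_of_wit {u v : List α} (hv : vstar u = vstar v) (hlen : u.length = v.length)
    (hnil : u ≠ []) (hne : u ≠ v)
    (hwit : ∃ j, j < u.length ∧ (∀ j', j < j' → u[j']? = v[j']?) ∧
      ∃ a b, u[j]? = some a ∧ v[j]? = some b ∧ a < b) : VLt u v := by
  rcases vlt_total hv hlen hnil hne with h | h
  · exact h
  · exfalso
    obtain ⟨j, hj, hbeyond, a, b, ha, hb, hab⟩ := hwit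
    obtain ⟨j2, hj2, hbeyond2, a2, b2, ha2, hb2, hab2⟩ :=
      cmp_wit hv.symm hlen.symm (by
        intro hh
        rw [hh] at hlen
        exact hnil (List.length_eq_zero_iff.1 (by simpa using hlen))) h
    rcases lt_trichotomy j j2 with hc | hc | hc
    · have := hbeyond j2 hc
      rw [hb2, ha2] at this
      exact absurd (Option.some.inj this).symm (ne_of_lt hab2)
    · subst hc
      rw [ha] at hb2; rw [hb] at ha2
      have h1 : a = b2 := Option.some.inj hb2
      have h2 : b = a2 := Option.some.inj ha2
      subst h1; subst h2
      exact absurd hab (not_lt_of_gt hab2)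
    · have := hbeyond2 j hc
      rw [ha, hb] at this
      exact absurd (Option.some.inj this) (ne_of_lt hab).symm



theorem chain_cons_of_le {lam mu : α} {w : List α} (h : lam ≤ mu)
    (hc : List.IsChain (· ≤ ·) (mu :: w)) : List.IsChain (· ≤ ·) (lam :: w) := by
  cases w with
  | nil => exact List.isChain_singleton lam
  | cons b w' =>
    rw [List.isChain_cons_cons] at hc ⊢
    exact ⟨le_trans h hc.1, hc.2⟩

theorem head_lt_of_not_chain {a b : α} {w : List α}
    (h : ¬ List.IsChain (· ≤ ·) (a :: b :: w)) (hc : List.IsChain (· ≤ ·) (b :: w)) : b < a :=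
  lt_of_not_ge (fun hab => h (List.isChain_cons_cons.2 ⟨hab, hc⟩))

theorem head_mono {mu a : α} {w : List α} (hc : List.IsChain (· ≤ ·) (mu :: w)) {i : ℕ}
    (h : w[i]? = some a) : mu ≤ a := by
  have hp : List.Pairwise (· ≤ ·) (mu :: w) := List.isChain_iff_pairwise.1 hc
  have hmem : a ∈ w := by
    have := List.getElem?_eq_some_iff.1 h
    obtain ⟨hlt, rfl⟩ := this
    exact List.getElem_mem hlt
  exact (List.pairwise_cons.1 hp).1 a hmem

theorem cons_of_chain_vstar {l : List α} (hc : List.IsChain (· ≤ ·) l) (hne : l ≠ []) :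
    ∃ c, l = c :: vstar l := by
  obtain ⟨c, w, rfl⟩ := List.exists_cons_of_ne_nil hne
  exact ⟨c, by rw [vstar_cons_of_chain hc]⟩

theorem exists_min_pair (X Y : List α) :
    ∃ S T, vstar^[S + 1] X = vstar^[T + 1] Y ∧
      ∀ s' t', vstar^[s' + 1] X = vstar^[t' + 1] Y → S ≤ s' ∧ T ≤ t' := by
  have hex : ∃ s', ∃ t', vstar^[s' + 1] X = vstar^[t' + 1] Y :=
    ⟨X.length, Y.length, by rw [iter_eq_nil (by omega), iter_eq_nil (by omega)]⟩
  have hext : ∃ t', ∃ s', vstar^[s' + 1] X = vstar^[t' + 1] Y :=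
    ⟨Y.length, X.length, by rw [iter_eq_nil (by omega), iter_eq_nil (by omega)]⟩
  classical
  set S := Nat.find hex with hS
  set T := Nat.find hext with hT
  obtain ⟨t1, ht1⟩ := Nat.find_spec hex
  obtain ⟨s2, hs2⟩ := Nat.find_spec hext
  have hTt1 : T ≤ t1 := Nat.find_le ⟨S, ht1⟩
  have hSs2 : S ≤ s2 := Nat.find_le ⟨T, hs2⟩
  have key : vstar^[S + 1] X = vstar^[T + 1] Y := by
    have hshift : vstar^[S + 1 + (s2 - S)] X = vstar^[t1 + 1 + (s2 - S)] Y := iter_shift ht1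
    have hidx : S + 1 + (s2 - S) = s2 + 1 := by omega
    rw [hidx] at hshift
    rw [hs2] at hshift
    by_cases hnil : vstar^[T + 1] Y = []
    · have : vstar^[t1 + 1] Y = [] := nil_mono hnil (by omega)
      rw [ht1, this, hnil]
    · have hidx2 := idx_eq hshift hnil
      have hs2S : s2 = S := by omega
      rw [hs2S] at hs2
      exact hs2
  exact ⟨S, T, key, fun s' t' h => ⟨Nat.find_le ⟨t', h⟩, Nat.find_le ⟨s', h⟩⟩⟩

theorem considx {y : List α} {e : α} {J K : ℕ} (hKle : K ≤ y.length)
    (h : vstar^[J] y = e :: vstar^[K] y) : J + 1 = K := by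
  have h1 := length_iter J y
  have h2 := length_iter K y
  rw [h] at h1
  simp only [List.length_cons] at h1
  omega

theorem teq {y : List α} {t K : ℕ} (hKle : K ≤ y.length) (ht : t + 1 ≤ y.length)
    (h : vstar^[t + 1] y = vstar^[K] y) : t + 1 = K := by
  by_cases hnil : vstar^[K] y = []
  · have h1 := length_iter K y
    have h2 := length_iter (t + 1) y
    rw [hnil] at h1
    rw [h, hnil] at h2
    simp at h1 h2
    omega
  · have hnil1 : vstar^[t + 1] y ≠ [] := by rw [h]; exact hnil
    exact idx_eq h hnil1

theorem yself {mu : α} {y : List α} {j : ℕ} (hj : j + 1 ≤ kidx mu y)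
    (h : vstar^[j] y = mu :: vstar^[j + 1] y) : False := by
  have h' : vstar^[j] y = mu :: vstar (vstar^[j] y) := by
    rw [← Function.iterate_succ_apply' vstar j y]; exact h
  have hch : List.IsChain (· ≤ ·) (vstar^[j] y) := chain_of_eq_cons_vstar h'
  rcases lt_or_eq_of_le hj with hlt | heq
  · exact kidx_min hlt (h ▸ hch)
  · have hch2 : List.IsChain (· ≤ ·) (mu :: vstar^[j] y) := by
      rw [h]
      exact List.isChain_cons_cons.2 ⟨le_rfl, h ▸ hch⟩
    have := kidx_le hch2
    omega


theorem xcons {x y : List α} {mu : α} {s t : ℕ}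
    (hxB : ¬ ∃ k, vstar^[k] x = y)
    (hst : vstar^[s + 1] x = vstar^[t + 1] y)
    (hmin : ∀ s' t', vstar^[s' + 1] x = vstar^[t' + 1] y → s ≤ s' ∧ t ≤ t')
    (hDLt : VLt (vstar^[s] x) (vstar^[t] y))
    {i j : ℕ} (hj : j ≤ kidx mu y) (h : vstar^[i] x = mu :: vstar^[j] y) : False := by
  have hynil : y ≠ [] := fun hy => hxB ⟨x.length, by rw [iter_eq_nil le_rfl, hy]⟩
  have hxnil : x ≠ [] := by
    intro hx
    rw [hx, iter_nil] at h
    exact List.cons_ne_nil _ _ h.symm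
  have hx1 : 1 ≤ x.length := List.length_pos_iff.2 hxnil
  have hy1 : 1 ≤ y.length := List.length_pos_iff.2 hynil
  have hylen : kidx mu y ≤ y.length := kidx_le_length mu y
  have casc : ∀ r, j + r ≤ kidx mu y → vstar^[i + r] x = mu :: vstar^[j + r] y := by
    intro r
    induction r with
    | zero => intro _; simpa using h
    | succ n ih =>
      intro hn
      have hprev := ih (by omega)
      have hthis : vstar^[i + n + 1] x = vstar (mu :: vstar^[j + n] y) := by
        rw [← hprev, ← Function.iterate_succ_apply' vstar (i + n) x]
      rw [vstar_cons_of_not_chain (kidx_min (by omega))] at hthis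
      rw [← Function.iterate_succ_apply' vstar (j + n) y] at hthis
      exact hthis
  have hI : vstar^[i + (kidx mu y - j)] x = mu :: vstar^[kidx mu y] y := by
    have := casc (kidx mu y - j) (by omega)
    rwa [show j + (kidx mu y - j) = kidx mu y from by omega] at this
  set i' := i + (kidx mu y - j) with hi'
  have hnext : vstar^[i' + 1] x = vstar^[kidx mu y] y := by
    rw [Function.iterate_succ_apply' vstar i' x, hI, vstar_cons_of_chain (kidx_chain mu y)]
  by_cases hKy0 : kidx mu y = 0
  · exact hxB ⟨i' + 1, by rw [hnext, hKy0, Function.iterate_zero_apply]⟩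
  have hKy1 : 1 ≤ kidx mu y := by omega
  have hsb := hmin (x.length - 1) (y.length - 1)
    (by rw [iter_eq_nil (by omega), iter_eq_nil (by omega)])
  have hsi : s ≤ i' :=
    (hmin i' (kidx mu y - 1) (by rw [hnext]; congr 1; omega)).1
  rcases eq_or_lt_of_le hsi with heq | hlt
  · -- s = i'
    have h1 : vstar^[t + 1] y = vstar^[kidx mu y] y := by
      rw [← hst, heq, hnext]
    have ht1 : t + 1 = kidx mu y := teq hylen (by omega) h1
    have hxs : vstar^[s] x = mu :: vstar^[kidx mu y] y := by rw [heq]; exact hI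
    have hdx : dpos (vstar^[s] x) = 0 := by
      rw [hxs]; exact dpos_cons_of_chain (kidx_chain mu y)
    rcases hDLt with hd1 | ⟨hdeq, a, b, ha, hb, hab⟩
    · omega
    · have hdy : dpos (vstar^[t] y) = 0 := by omega
      have hcy : List.IsChain (· ≤ ·) (vstar^[t] y) := dpos_eq_zero_iff.1 hdy
      have hytnil : vstar^[t] y ≠ [] := iter_ne_nil (by omega)
      obtain ⟨c, hc⟩ := cons_of_chain_vstar hcy hytnil
      have hc2 : vstar^[t] y = c :: vstar^[kidx mu y] y := by
        rw [hc, ← Function.iterate_succ_apply' vstar t y, h1]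
      have hcw : List.IsChain (· ≤ ·) (c :: vstar^[kidx mu y] y) := by rw [← hc2]; exact hcy
      have hamu : a = mu := by
        rw [hxs] at ha
        rw [dpos_cons_of_chain (kidx_chain mu y)] at ha
        simp at ha
        exact ha.symm
      have hbc : b = c := by
        rw [hc2] at hb
        rw [dpos_cons_of_chain hcw] at hb
        simp at hb
        exact hb.symm
      have hnc : ¬ List.IsChain (· ≤ ·) (mu :: vstar^[t] y) := kidx_min (by omega)
      rw [hc2] at hnc
      have := head_lt_of_not_chain hnc hcw
      rw [hamu, hbc] at hab
      exact absurd hab (not_lt_of_gt this)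
  · -- s < i'
    have hshift : vstar^[s + 1 + (i' - s - 1)] x = vstar^[t + 1 + (i' - s - 1)] y :=
      iter_shift hst
    rw [show s + 1 + (i' - s - 1) = i' from by omega] at hshift
    set J := t + 1 + (i' - s - 1) with hJdef
    have hJ : vstar^[J] y = mu :: vstar^[kidx mu y] y := by rw [← hshift]; exact hI
    have hJ1 : J + 1 = kidx mu y := considx hylen hJ
    exact yself (mu := mu) (y := y) (j := J) (by omega) (by rw [hJ1]; exact hJ)

theorem xcons2 {x y : List α} {mu c : α} {s t : ℕ}
    (hxB : ¬ ∃ k, vstar^[k] x = y)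
    (hst : vstar^[s + 1] x = vstar^[t + 1] y)
    (hmin : ∀ s' t', vstar^[s' + 1] x = vstar^[t' + 1] y → s ≤ s' ∧ t ≤ t')
    (hDLt : VLt (vstar^[s] x) (vstar^[t] y))
    {i : ℕ} (hch : List.IsChain (· ≤ ·) (vstar^[i] x))
    (h : vstar^[i] x = c :: vstar^[kidx mu y] y) : c < mu := by
  have hynil : y ≠ [] := fun hy => hxB ⟨x.length, by rw [iter_eq_nil le_rfl, hy]⟩
  have hxnil : x ≠ [] := by
    intro hx
    rw [hx, iter_nil] at h
    exact List.cons_ne_nil _ _ h.symm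
  have hx1 : 1 ≤ x.length := List.length_pos_iff.2 hxnil
  have hy1 : 1 ≤ y.length := List.length_pos_iff.2 hynil
  have hylen : kidx mu y ≤ y.length := kidx_le_length mu y
  have hnext : vstar^[i + 1] x = vstar^[kidx mu y] y := by
    rw [Function.iterate_succ_apply' vstar i x, vstar_of_chain hch, h]
    rfl
  by_cases hKy0 : kidx mu y = 0
  · exact absurd ⟨i + 1, by rw [hnext, hKy0, Function.iterate_zero_apply]⟩ hxB
  have hKy1 : 1 ≤ kidx mu y := by omega
  have hsb := hmin (x.length - 1) (y.length - 1)
    (by rw [iter_eq_nil (by omega), iter_eq_nil (by omega)])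
  have hsi : s ≤ i :=
    (hmin i (kidx mu y - 1) (by rw [hnext]; congr 1; omega)).1
  rcases eq_or_lt_of_le hsi with heq | hlt
  · -- s = i
    have h1 : vstar^[t + 1] y = vstar^[kidx mu y] y := by
      rw [← hst, heq, hnext]
    have ht1 : t + 1 = kidx mu y := teq hylen (by omega) h1
    have hxs : vstar^[s] x = c :: vstar^[kidx mu y] y := by rw [heq]; exact h
    have hdx : dpos (vstar^[s] x) = 0 := by
      rw [heq]; exact dpos_eq_zero_iff.2 hch
    rcases hDLt with hd1 | ⟨hdeq, a, b, ha, hb, hab⟩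
    · omega
    · have hdy : dpos (vstar^[t] y) = 0 := by omega
      have hcy : List.IsChain (· ≤ ·) (vstar^[t] y) := dpos_eq_zero_iff.1 hdy
      have hytnil : vstar^[t] y ≠ [] := iter_ne_nil (by omega)
      obtain ⟨c', hc'⟩ := cons_of_chain_vstar hcy hytnil
      have hc2 : vstar^[t] y = c' :: vstar^[kidx mu y] y := by
        rw [hc', ← Function.iterate_succ_apply' vstar t y, h1]
      have hcw : List.IsChain (· ≤ ·) (c' :: vstar^[kidx mu y] y) := by rw [← hc2]; exact hcy
      have hchc : List.IsChain (· ≤ ·) (c :: vstar^[kidx mu y] y) := by rw [← hxs]; rw [heq]; exact hch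
      have hac : a = c := by
        rw [hxs] at ha
        rw [dpos_cons_of_chain hchc] at ha
        simp at ha
        exact ha.symm
      have hbc : b = c' := by
        rw [hc2] at hb
        rw [dpos_cons_of_chain hcw] at hb
        simp at hb
        exact hb.symm
      have hnc : ¬ List.IsChain (· ≤ ·) (mu :: vstar^[t] y) := kidx_min (by omega)
      rw [hc2] at hnc
      have hcmu : c' < mu := head_lt_of_not_chain hnc hcw
      rw [hac, hbc] at hab
      exact lt_trans hab hcmu
  · -- s < i
    have hshift : vstar^[s + 1 + (i - s - 1)] x = vstar^[t + 1 + (i - s - 1)] y :=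
      iter_shift hst
    rw [show s + 1 + (i - s - 1) = i from by omega] at hshift
    set J := t + 1 + (i - s - 1) with hJdef
    have hJ : vstar^[J] y = c :: vstar^[kidx mu y] y := by rw [← hshift]; exact h
    have hJ1 : J + 1 = kidx mu y := considx hylen hJ
    have hchJ : List.IsChain (· ≤ ·) (vstar^[J] y) := by rw [← hshift]; exact hch
    have hnc : ¬ List.IsChain (· ≤ ·) (mu :: vstar^[J] y) := kidx_min (by omega)
    rw [hJ] at hnc hchJ
    exact head_lt_of_not_chain hnc hchJ


theorem chain_iter_ge (mu : α) {y : List α} {m : ℕ} (hm : kidx mu y ≤ m) :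
    List.IsChain (· ≤ ·) (vstar^[m] y) := by
  have base : List.IsChain (· ≤ ·) (vstar^[kidx mu y] y) := (kidx_chain mu y).tail
  obtain ⟨r, rfl⟩ : ∃ r, m = r + kidx mu y := ⟨m - kidx mu y, by omega⟩
  clear hm
  induction r with
  | zero => simpa using base
  | succ n ih =>
    rw [show n + 1 + kidx mu y = n + kidx mu y + 1 from by omega,
      Function.iterate_succ_apply']
    exact chain_vstar ih

theorem vfact {mu : α} {y : List α} {T : ℕ} (hT : kidx mu y ≤ T)
    (hne : vstar^[T] (mu :: y) ≠ []) :
    List.IsChain (· ≤ ·) (vstar^[T] (mu :: y)) ∧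
      ∃ c, mu ≤ c ∧ vstar^[T] (mu :: y) = c :: vstar^[T + 1] (mu :: y) := by
  have hT1 : vstar^[T + 1] (mu :: y) = vstar^[T] y := by
    rw [iter_cons_gt (by omega), Nat.add_sub_cancel]
  rcases eq_or_lt_of_le hT with heq | hTgt
  · have hV : vstar^[T] (mu :: y) = mu :: vstar^[T] y := iter_cons_le (le_of_eq heq.symm)
    have hch : List.IsChain (· ≤ ·) (mu :: vstar^[T] y) := by
      have := kidx_chain mu y
      rwa [heq] at this
    refine ⟨by rw [hV]; exact hch, mu, le_rfl, by rw [hV, hT1]⟩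
  · have hV : vstar^[T] (mu :: y) = vstar^[T - 1] y := iter_cons_gt hTgt
    have hch : List.IsChain (· ≤ ·) (vstar^[T - 1] y) := chain_iter_ge mu (by omega)
    have hne' : vstar^[T - 1] y ≠ [] := by rw [← hV]; exact hne
    obtain ⟨c, hc⟩ := cons_of_chain_vstar hch hne'
    refine ⟨by rw [hV]; exact hch, c, ?_, ?_⟩
    · -- mu ≤ c via drop
      have hdrop : vstar^[T - 1] y = vstar^[T - 1 - kidx mu y] (vstar^[kidx mu y] y) := by
        rw [← Function.iterate_add_apply]
        congr 1
        omega
      have hchw : List.IsChain (· ≤ ·) (vstar^[kidx mu y] y) := (kidx_chain mu y).tail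
      have hdrop2 : vstar^[T - 1] y = (vstar^[kidx mu y] y).drop (T - 1 - kidx mu y) := by
        rw [hdrop, iter_of_chain hchw]
      have hget : (vstar^[kidx mu y] y)[T - 1 - kidx mu y + 0]? = some c := by
        rw [← List.getElem?_drop, ← hdrop2, hc]
        simp
      exact head_mono (kidx_chain mu y) hget
    · rw [hV, hT1, hc, ← Function.iterate_succ_apply' vstar (T - 1) y]
      congr 2
      omega

theorem pair_facts {x y : List α} {s t : ℕ}
    (hxy : x ≠ y)
    (hA : ¬ ∃ k, vstar^[k] y = x) (hB : ¬ ∃ k, vstar^[k] x = y)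
    (hst : vstar^[s + 1] x = vstar^[t + 1] y)
    (hmin : ∀ s' t', vstar^[s' + 1] x = vstar^[t' + 1] y → s ≤ s' ∧ t ≤ t') :
    x ≠ [] ∧ y ≠ [] ∧ s ≤ x.length - 1 ∧ t ≤ y.length - 1 ∧
    (vstar^[s] x).length = (vstar^[t] y).length ∧ vstar^[s] x ≠ [] ∧
    vstar^[s] x ≠ vstar^[t] y ∧ vstar (vstar^[s] x) = vstar (vstar^[t] y) := by
  have hxnil : x ≠ [] := by
    rintro rfl
    exact hA ⟨y.length, iter_eq_nil le_rfl⟩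
  have hynil : y ≠ [] := by
    rintro rfl
    exact hB ⟨x.length, iter_eq_nil le_rfl⟩
  have hx1 : 1 ≤ x.length := List.length_pos_iff.2 hxnil
  have hy1 : 1 ≤ y.length := List.length_pos_iff.2 hynil
  have hb := hmin (x.length - 1) (y.length - 1)
    (by rw [iter_eq_nil (by omega), iter_eq_nil (by omega)])
  have hlx := length_iter s x
  have hly := length_iter t y
  have hlx1 := length_iter (s + 1) x
  have hly1 := length_iter (t + 1) y
  have hlen : (vstar^[s] x).length = (vstar^[t] y).length := by
    by_cases hW : vstar^[s + 1] x = []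
    · have h1 : (vstar^[s + 1] x).length = 0 := by rw [hW]; rfl
      have h2 : (vstar^[t + 1] y).length = 0 := by rw [← hst, hW]; rfl
      omega
    · have hWlen : (vstar^[s + 1] x).length = (vstar^[t + 1] y).length := by rw [hst]
      have h1 : 0 < (vstar^[s + 1] x).length := List.length_pos_iff.2 hW
      omega
  have hsnil : vstar^[s] x ≠ [] := iter_ne_nil (by omega)
  have hne : vstar^[s] x ≠ vstar^[t] y := by
    intro he
    rcases Nat.eq_zero_or_pos s with rfl | hs
    · rcases Nat.eq_zero_or_pos t with rfl | ht
      · exact hxy (by simpa using he)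
      · exact hA ⟨t, by simpa using he.symm⟩
    · rcases Nat.eq_zero_or_pos t with rfl | ht
      · exact hB ⟨s, by simpa using he⟩
      · have := hmin (s - 1) (t - 1) (by
          rw [show s - 1 + 1 = s from by omega, show t - 1 + 1 = t from by omega]
          exact he)
        omega
  refine ⟨hxnil, hynil, by omega, by omega, hlen, hsnil, hne, ?_⟩
  rw [← Function.iterate_succ_apply' vstar s x, ← Function.iterate_succ_apply' vstar t y]
  exact hst

-- MAIN2

/-- For distinct strings `x`, `y` and letters `λ ≤ μ`:
if `x ≺ y` in V-order then `λx ≺ μy`. -/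
theorem vless_cons_mono {α : Type*} [LinearOrder α]
    (x y : List α) (lam mu : α) (hxy : x ≠ y) (hlm : lam ≤ mu) :
    VLess x y → VLess (lam :: x) (mu :: y) := by
  intro hless
  classical
  have hXYne : (lam :: x) ≠ (mu :: y) := by
    intro h
    injection h with h1 h2
    exact hxy h2
  by_cases hL : ∃ k, vstar^[k] (mu :: y) = (lam :: x)
  · obtain ⟨k, hk⟩ := hL
    left
    refine ⟨k, ?_, hk⟩
    rcases Nat.eq_zero_or_pos k with rfl | h
    · rw [Function.iterate_zero_apply] at hk
      exact absurd hk hXYne.symm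
    · exact h
  right
  obtain ⟨S, T, hST, hSTmin⟩ := exists_min_pair (lam :: x) (mu :: y)
  rcases hless with ⟨k0, hk00, hk0y⟩ | ⟨hA, hB, s, t, hst, hmin, hwit⟩
  · -- BRANCH L : x = vstar^[k0] y
    have hynil : y ≠ [] := by
      rintro rfl
      rw [iter_nil] at hk0y
      exact hxy hk0y.symm
    have hy1 : 1 ≤ y.length := List.length_pos_iff.2 hynil
    set k := min k0 y.length with hkdef
    have hky : vstar^[k] y = x := by
      rcases le_or_gt k0 y.length with hc | hc
      · rw [hkdef, min_eq_left hc]; exact hk0y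
      · have h1 : vstar^[k0] y = [] := iter_eq_nil (by omega)
        have h2 : vstar^[y.length] y = [] := iter_eq_nil le_rfl
        rw [hkdef, min_eq_right (by omega : y.length ≤ k0), h2, ← hk0y, h1]
    have hk1 : 1 ≤ k := by omega
    have hkley : k ≤ y.length := by omega
    have hxi : ∀ i, vstar^[i] x = vstar^[k + i] y := by
      intro i
      rw [← hky, ← Function.iterate_add_apply]
      congr 1
      omega
    have hHB : ¬ ∃ m, vstar^[m] (lam :: x) = (mu :: y) := by
      rintro ⟨m, hm⟩
      rcases le_or_gt m (kidx lam x) with hmle | hmgt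
      · rw [iter_cons_le hmle] at hm
        injection hm with h1 h2
        have h3 := hxi m
        rw [h2] at h3
        have h4 : (0 : ℕ) = k + m :=
          idx_eq (w := y) (i := 0) (j := k + m) (by simpa using h3) (by simpa using hynil)
        omega
      · rw [iter_cons_gt hmgt] at hm
        have h0 := hxi (m - 1)
        rw [hm] at h0
        have h5 : k + (m - 1) + 1 = 0 :=
          considx (K := 0) (by omega) (by simpa using h0.symm)
        omega
    obtain ⟨hXnil, hYnil, hSb, hTb, hUVlen, hUnil, hUneV, hUVv⟩ :=
      pair_facts hXYne hL hHB hST hSTmin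
    refine ⟨hL, hHB, S, T, hST, hSTmin, ?_⟩
    have hSb' : S ≤ x.length := by simpa using hSb
    have hTb' : T ≤ y.length := by simpa using hTb
    have hVnil : vstar^[T] (mu :: y) ≠ [] := by
      intro hh
      rw [hh] at hUVlen
      simp at hUVlen
      exact hUnil hUVlen
    have main : VLt (vstar^[S] (lam :: x)) (vstar^[T] (mu :: y)) := by
      rcases lt_or_ge T (kidx mu y) with hTlt | hTge
      · -- T < Ky : always contradiction in branch L
        exfalso
        rcases lt_or_ge S (kidx lam x) with hSlt | hSge
        · -- lam = mu and k ≤ Ky ⇒ hL contra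
          have hWX : vstar^[S + 1] (lam :: x) = lam :: vstar^[S + 1] x :=
            iter_cons_le (by omega)
          have hWY : vstar^[T + 1] (mu :: y) = mu :: vstar^[T + 1] y :=
            iter_cons_le (by omega)
          have hST' := hST
          rw [hWX, hWY] at hST'
          injection hST' with hlm2 hxyST
          have hkKy : k ≤ kidx mu y := by
            by_cases hnil2 : vstar^[T + 1] y = []
            · have hla := length_iter (T + 1) y
              have hKyl := kidx_le_length mu y
              have hlb : (vstar^[T + 1] y).length = 0 := by rw [hnil2]; rfl
              omega
            · have h6 := hxi (S + 1)
              rw [hxyST] at h6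
              have h7 := idx_eq h6 hnil2
              omega
          exact hL ⟨k, by rw [iter_cons_le hkKy, hky, hlm2]⟩
        · -- S ≥ Kx : considx + yself
          have hWx : vstar^[S + 1] (lam :: x) = vstar^[S] x := by
            rw [iter_cons_gt (by omega), Nat.add_sub_cancel]
          have hWY : vstar^[T + 1] (mu :: y) = mu :: vstar^[T + 1] y :=
            iter_cons_le (by omega)
          have h8 : vstar^[k + S] y = mu :: vstar^[T + 1] y := by
            rw [← hxi S, ← hWx, hST, hWY]
          have h9 : k + S + 1 = T + 1 := considx (by
            have := kidx_le_length mu y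
            omega) h8
          exact yself (mu := mu) (y := y) (j := T) (by omega)
            (by rw [show T = k + S from by omega, h9]; exact h8)
      · -- T ≥ Ky
        obtain ⟨hVch, c, hmuc, hVc⟩ := vfact hTge hVnil
        have hdV : dpos (vstar^[T] (mu :: y)) = 0 := dpos_eq_zero_iff.2 hVch
        rcases lt_or_ge S (kidx lam x) with hSlt | hSge
        · -- A1 : S < Kx
          have hU : vstar^[S] (lam :: x) = lam :: vstar^[S] x := iter_cons_le (by omega)
          have hdU : dpos (vstar^[S] (lam :: x)) = dpos (vstar^[S] x) + 1 := by
            rw [hU]; exact dpos_cons_of_not_chain (kidx_min hSlt)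
          exact Or.inl (by omega)
        rcases eq_or_lt_of_le hSge with hSeq | hSgt
        · -- A2 : S = Kx
          have hU : vstar^[S] (lam :: x) = lam :: vstar^[S] x :=
            iter_cons_le (le_of_eq hSeq.symm)
          have hchU : List.IsChain (· ≤ ·) (lam :: vstar^[S] x) := by
            have := kidx_chain lam x
            rwa [hSeq] at this
          have hWx : vstar^[S + 1] (lam :: x) = vstar^[S] x := by
            rw [iter_cons_gt (by omega), Nat.add_sub_cancel]
          have hVc2 : vstar^[T] (mu :: y) = c :: vstar^[S] x := by
            rw [hVc, ← hST, hWx]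
          have hlamc : lam ≠ c := by
            intro hh
            apply hUneV
            rw [hU, hVc2, hh]
          have hdU0 : dpos (vstar^[S] (lam :: x)) = 0 := by
            rw [hU]; exact dpos_cons_of_chain hchU
          refine Or.inr ⟨by omega, lam, c, ?_, ?_, lt_of_le_of_ne (le_trans hlm hmuc) hlamc⟩
          · rw [hdU0, hU]
            simp
          · rw [hdV, hVc2]
            simp
        · -- S > Kx
          have hU : vstar^[S] (lam :: x) = vstar^[S - 1] x := iter_cons_gt hSgt
          have hWx : vstar^[S + 1] (lam :: x) = vstar^[S] x := by
            rw [iter_cons_gt (by omega), Nat.add_sub_cancel]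
          rcases eq_or_lt_of_le hTge with hTeq | hTgt
          · -- L6 : T = Ky
            by_cases hdU : dpos (vstar^[S] (lam :: x)) = 0
            · have hchU : List.IsChain (· ≤ ·) (vstar^[S] (lam :: x)) :=
                dpos_eq_zero_iff.1 hdU
              have hchU' : List.IsChain (· ≤ ·) (vstar^[S - 1] x) := by
                rw [← hU]; exact hchU
              have hUne2 : vstar^[S - 1] x ≠ [] := by rw [← hU]; exact hUnil
              obtain ⟨c', hc'⟩ := cons_of_chain_vstar hchU' hUne2
              have hvU : vstar (vstar^[S - 1] x) = vstar^[S] x := by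
                rw [← Function.iterate_succ_apply' vstar (S - 1) x]
                congr 1
                omega
              have hWy : vstar^[T + 1] (mu :: y) = vstar^[T] y := by
                rw [iter_cons_gt (by omega), Nat.add_sub_cancel]
              have hxSW : vstar^[S] x = vstar^[kidx mu y] y := by
                rw [← hWx, hST, hWy, ← hTeq]
              have hc'' : vstar^[S - 1] x = c' :: vstar^[kidx mu y] y := by
                rw [hc', hvU, hxSW]
              have h10 : vstar^[k + (S - 1)] y = c' :: vstar^[kidx mu y] y := by
                rw [← hxi, hc'']
              have h11 : k + (S - 1) + 1 = kidx mu y :=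
                considx (kidx_le_length mu y) h10
              have hnc : ¬ List.IsChain (· ≤ ·) (mu :: vstar^[k + (S - 1)] y) :=
                kidx_min (by omega)
              rw [h10] at hnc
              have hcw : List.IsChain (· ≤ ·) (c' :: vstar^[kidx mu y] y) := by
                rw [← hc'']; exact hchU'
              have hc'mu : c' < mu := head_lt_of_not_chain hnc hcw
              refine Or.inr ⟨by omega, c', c, ?_, ?_, lt_of_lt_of_le hc'mu hmuc⟩
              · rw [hdU, hU, hc'']
                simp
              · rw [hdV, hVc]
                simp
            · exact Or.inl (by omega)
          · -- L8 : T > Ky : contradiction U = V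
            exfalso
            apply hUneV
            have hV : vstar^[T] (mu :: y) = vstar^[T - 1] y := iter_cons_gt hTgt
            have hWy : vstar^[T + 1] (mu :: y) = vstar^[T] y := by
              rw [iter_cons_gt (by omega), Nat.add_sub_cancel]
            have hWxy : vstar^[S] x = vstar^[T] y := by
              rw [← hWx, hST, hWy]
            have hkS : vstar^[k + S] y = vstar^[T] y := by
              rw [← hxi, hWxy]
            by_cases hWnil : vstar^[S] x = []
            · have hUy : vstar^[S - 1] x = vstar^[k + (S - 1)] y := hxi (S - 1)
              have hUnil' : vstar^[k + (S - 1)] y ≠ [] := by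
                rw [← hUy, ← hU]; exact hUnil
              have hVnil' : vstar^[T - 1] y ≠ [] := by rw [← hV]; exact hVnil
              have hlUS := length_iter S x
              have hS0 : (vstar^[S] x).length = 0 := by rw [hWnil]; rfl
              have hT0 : (vstar^[T] y).length = 0 := by rw [← hWxy, hWnil]; rfl
              have hlTy := length_iter T y
              have hlU := length_iter (S - 1) x
              have hl1 := length_iter (k + (S - 1)) y
              have h12 : (vstar^[k + (S - 1)] y).length = 1 := by
                rw [← hUy, length_iter]
                omega
              rw [hU, hV, hUy, show k + (S - 1) = T - 1 from by omega]
            · have h14 : k + S = T := idx_eq hkS (by rw [hkS, ← hWxy]; exact hWnil)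
              rw [hU, hV, hxi (S - 1), show k + (S - 1) = T - 1 from by omega]
    exact cmp_wit hUVv hUVlen hUnil main
  · -- BRANCH R
    obtain ⟨hxnil, hynil, hsb, htb, hlen1, hnil1, hne1, hv1⟩ := pair_facts hxy hA hB hst hmin
    have hx1 : 1 ≤ x.length := List.length_pos_iff.2 hxnil
    have hy1 : 1 ≤ y.length := List.length_pos_iff.2 hynil
    have hDLt : VLt (vstar^[s] x) (vstar^[t] y) := vlt_of_wit hv1 hlen1 hnil1 hne1 hwit
    have hHB : ¬ ∃ m, vstar^[m] (lam :: x) = (mu :: y) := by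
      rintro ⟨m, hm⟩
      rcases le_or_gt m (kidx lam x) with hmle | hmgt
      · rw [iter_cons_le hmle] at hm
        injection hm with h1 h2
        exact hB ⟨m, h2⟩
      · rw [iter_cons_gt hmgt] at hm
        exact xcons hB hst hmin hDLt (j := 0) (Nat.zero_le _) hm
    obtain ⟨hXnil, hYnil, hSb, hTb, hUVlen, hUnil, hUneV, hUVv⟩ :=
      pair_facts hXYne hL hHB hST hSTmin
    refine ⟨hL, hHB, S, T, hST, hSTmin, ?_⟩
    have hSb' : S ≤ x.length := by simpa using hSb
    have hTb' : T ≤ y.length := by simpa using hTb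
    have hVnil : vstar^[T] (mu :: y) ≠ [] := by
      intro hh
      rw [hh] at hUVlen
      simp at hUVlen
      exact hUnil hUVlen
    have main : VLt (vstar^[S] (lam :: x)) (vstar^[T] (mu :: y)) := by
      rcases lt_or_ge T (kidx mu y) with hTlt | hTge
      · -- T < Ky
        rcases lt_or_ge S (kidx lam x) with hSlt | hSge
        · -- R1a : S < Kx, T < Ky
          have hWX : vstar^[S + 1] (lam :: x) = lam :: vstar^[S + 1] x :=
            iter_cons_le (by omega)
          have hWY : vstar^[T + 1] (mu :: y) = mu :: vstar^[T + 1] y :=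
            iter_cons_le (by omega)
          have hST' := hST
          rw [hWX, hWY] at hST'
          injection hST' with hlm2 hxyST
          have h1 := hmin S T hxyST
          have h2 := hSTmin s t (by
            rw [iter_cons_le (show s + 1 ≤ kidx lam x by omega),
              iter_cons_le (show t + 1 ≤ kidx mu y by omega), hlm2, hst])
          have hSs : S = s := by omega
          have hTt : T = t := by omega
          have hU : vstar^[S] (lam :: x) = lam :: vstar^[S] x := iter_cons_le (by omega)
          have hV : vstar^[T] (mu :: y) = mu :: vstar^[T] y := iter_cons_le (by omega)
          have hdU : dpos (vstar^[S] (lam :: x)) = dpos (vstar^[S] x) + 1 := by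
            rw [hU]; exact dpos_cons_of_not_chain (kidx_min hSlt)
          have hdV : dpos (vstar^[T] (mu :: y)) = dpos (vstar^[T] y) + 1 := by
            rw [hV]; exact dpos_cons_of_not_chain (kidx_min hTlt)
          have hDLt' : VLt (vstar^[S] x) (vstar^[T] y) := by
            rw [hSs, hTt]; exact hDLt
          rcases hDLt' with hd | ⟨hdeq, a, b, ha, hb, hab⟩
          · exact Or.inl (by omega)
          · refine Or.inr ⟨by omega, a, b, ?_, ?_, hab⟩
            · rw [hdU, hU]
              rw [List.getElem?_cons_succ]
              exact ha
            · rw [hdV, hV]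
              rw [List.getElem?_cons_succ]
              exact hb
        · -- S ≥ Kx, T < Ky : contradiction via xcons
          exfalso
          have hWx : vstar^[S + 1] (lam :: x) = vstar^[S] x := by
            rw [iter_cons_gt (by omega), Nat.add_sub_cancel]
          have hWY : vstar^[T + 1] (mu :: y) = mu :: vstar^[T + 1] y :=
            iter_cons_le (by omega)
          exact xcons hB hst hmin hDLt (show T + 1 ≤ kidx mu y by omega)
            (by rw [← hWx, hST, hWY])
      · -- T ≥ Ky
        obtain ⟨hVch, c, hmuc, hVc⟩ := vfact hTge hVnil
        have hdV : dpos (vstar^[T] (mu :: y)) = 0 := dpos_eq_zero_iff.2 hVch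
        rcases lt_or_ge S (kidx lam x) with hSlt | hSge
        · -- A1 : S < Kx
          have hU : vstar^[S] (lam :: x) = lam :: vstar^[S] x := iter_cons_le (by omega)
          have hdU : dpos (vstar^[S] (lam :: x)) = dpos (vstar^[S] x) + 1 := by
            rw [hU]; exact dpos_cons_of_not_chain (kidx_min hSlt)
          exact Or.inl (by omega)
        rcases eq_or_lt_of_le hSge with hSeq | hSgt
        · -- A2 : S = Kx
          have hU : vstar^[S] (lam :: x) = lam :: vstar^[S] x :=
            iter_cons_le (le_of_eq hSeq.symm)
          have hchU : List.IsChain (· ≤ ·) (lam :: vstar^[S] x) := by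
            have := kidx_chain lam x
            rwa [hSeq] at this
          have hWx : vstar^[S + 1] (lam :: x) = vstar^[S] x := by
            rw [iter_cons_gt (by omega), Nat.add_sub_cancel]
          have hVc2 : vstar^[T] (mu :: y) = c :: vstar^[S] x := by
            rw [hVc, ← hST, hWx]
          have hlamc : lam ≠ c := by
            intro hh
            apply hUneV
            rw [hU, hVc2, hh]
          have hdU0 : dpos (vstar^[S] (lam :: x)) = 0 := by
            rw [hU]; exact dpos_cons_of_chain hchU
          refine Or.inr ⟨by omega, lam, c, ?_, ?_, lt_of_le_of_ne (le_trans hlm hmuc) hlamc⟩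
          · rw [hdU0, hU]
            simp
          · rw [hdV, hVc2]
            simp
        · -- S > Kx
          have hU : vstar^[S] (lam :: x) = vstar^[S - 1] x := iter_cons_gt hSgt
          have hWx : vstar^[S + 1] (lam :: x) = vstar^[S] x := by
            rw [iter_cons_gt (by omega), Nat.add_sub_cancel]
          rcases eq_or_lt_of_le hTge with hTeq | hTgt
          · -- R3a : T = Ky
            by_cases hdU : dpos (vstar^[S] (lam :: x)) = 0
            · have hchU : List.IsChain (· ≤ ·) (vstar^[S] (lam :: x)) :=
                dpos_eq_zero_iff.1 hdU
              have hchU' : List.IsChain (· ≤ ·) (vstar^[S - 1] x) := by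
                rw [← hU]; exact hchU
              have hUne2 : vstar^[S - 1] x ≠ [] := by rw [← hU]; exact hUnil
              obtain ⟨c', hc'⟩ := cons_of_chain_vstar hchU' hUne2
              have hvU : vstar (vstar^[S - 1] x) = vstar^[S] x := by
                rw [← Function.iterate_succ_apply' vstar (S - 1) x]
                congr 1
                omega
              have hWy : vstar^[T + 1] (mu :: y) = vstar^[T] y := by
                rw [iter_cons_gt (by omega), Nat.add_sub_cancel]
              have hxSW : vstar^[S] x = vstar^[kidx mu y] y := by
                rw [← hWx, hST, hWy, ← hTeq]
              have hc'' : vstar^[S - 1] x = c' :: vstar^[kidx mu y] y := by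
                rw [hc', hvU, hxSW]
              have hc'mu : c' < mu := xcons2 hB hst hmin hDLt hchU' hc''
              refine Or.inr ⟨by omega, c', c, ?_, ?_, lt_of_lt_of_le hc'mu hmuc⟩
              · rw [hdU, hU, hc'']
                simp
              · rw [hdV, hVc]
                simp
            · exact Or.inl (by omega)
          · -- R4 : T > Ky
            have hV : vstar^[T] (mu :: y) = vstar^[T - 1] y := iter_cons_gt hTgt
            have hWy : vstar^[T + 1] (mu :: y) = vstar^[T] y := by
              rw [iter_cons_gt (by omega), Nat.add_sub_cancel]
            have hWxy : vstar^[S] x = vstar^[T] y := by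
              rw [← hWx, hST, hWy]
            by_cases hWnil : vstar^[S] x = []
            · -- merge at empty
              have hlS := length_iter S x
              have hlT := length_iter T y
              have hS0 : (vstar^[S] x).length = 0 := by rw [hWnil]; rfl
              have hT0 : (vstar^[T] y).length = 0 := by rw [← hWxy, hWnil]; rfl
              have hSeq2 : S = x.length := by omega
              have hTeq2 : T = y.length := by omega
              by_cases hW2 : vstar^[s + 1] x = []
              · have hls := length_iter (s + 1) x
                have hlt := length_iter (t + 1) y
                have hs0 : (vstar^[s + 1] x).length = 0 := by rw [hW2]; rfl
                have ht0 : (vstar^[t + 1] y).length = 0 := by rw [← hst, hW2]; rfl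
                have hseq : s = x.length - 1 := by omega
                have hteq : t = y.length - 1 := by omega
                rw [hU, hV, show S - 1 = s from by omega, show T - 1 = t from by omega]
                exact hDLt
              · exfalso
                apply hUneV
                have hs2 : s + 1 < x.length := by
                  have := length_iter (s + 1) x
                  have := List.length_pos_iff.2 hW2
                  omega
                have hshift := iter_shift (r := x.length - 1 - (s + 1)) hst
                rw [show s + 1 + (x.length - 1 - (s + 1)) = x.length - 1 from by omega]
                  at hshift
                have hJlen := length_iter (t + 1 + (x.length - 1 - (s + 1))) y
                have hJlen2 : (vstar^[t + 1 + (x.length - 1 - (s + 1))] y).length = 1 := by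
                  rw [← hshift, length_iter]
                  omega
                have hJ : t + 1 + (x.length - 1 - (s + 1)) = y.length - 1 := by omega
                rw [hU, hV, show S - 1 = x.length - 1 from by omega,
                  show T - 1 = y.length - 1 from by omega, ← hJ, ← hshift]
            · -- merge nonempty
              have hmin2 := hmin (S - 1) (T - 1) (by
                rw [show S - 1 + 1 = S from by omega, show T - 1 + 1 = T from by omega]
                exact hWxy)
              rcases eq_or_lt_of_le hmin2.1 with hseq | hslt
              · -- s = S - 1
                have hyt : vstar^[t + 1] y = vstar^[T] y := by
                  rw [← hst, ← hWxy]
                  congr 1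
                  omega
                have ht2 : t + 1 = T :=
                  idx_eq hyt (by rw [hyt, ← hWxy]; exact hWnil)
                rw [hU, hV, show S - 1 = s from by omega, show T - 1 = t from by omega]
                exact hDLt
              · -- s < S - 1
                exfalso
                apply hUneV
                have hshift := iter_shift (r := S - 1 - (s + 1)) hst
                rw [show s + 1 + (S - 1 - (s + 1)) = S - 1 from by omega] at hshift
                have hshift2 := iter_shift (r := S - (s + 1)) hst
                rw [show s + 1 + (S - (s + 1)) = S from by omega] at hshift2
                have hTJ : t + 1 + (S - (s + 1)) = T :=
                  idx_eq (hshift2.symm.trans hWxy) (by rw [← hshift2]; exact hWnil)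
                rw [hU, hV, show T - 1 = t + 1 + (S - 1 - (s + 1)) from by omega, ← hshift]
    exact cmp_wit hUVv hUVlen hUnil main
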